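/- For two linear orderings L and L' of a finite set C, the following are equivalent: (A) there exist alternatives i, j, k with i >_L k, j >_L k, i >_{L'} k, j >_{L'} k, i ≠ j, L⁻(k) ≠ L'⁻(k), and L⁻(i) = L'⁻(j); (B) there exists a nonempty proper subset U of C that is a beginning set of both L and L' such that L and L' coincide neither on U nor on C \ U. -/

import Mathlib

/-- A linear ordering of `α`, encoded as the list of all elements in decreasing order. -/
def IsLinOrd {α : Type*} (l : List α) : Prop := l.Nodup ∧ ∀ a : α, a ∈ l

/-- The beginning set `L⁻(i) = {j : j ≥_L i}` of the linear ordering given by list `l`. -/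
def Lminus {α : Type*} [DecidableEq α] (l : List α) (i : α) : Finset α :=
  insert i (l.takeWhile (fun a => a ≠ i)).toFinset

/-- `i >_L k` for the linear ordering given by list `l` (earlier in the list = greater). -/
def gtL {α : Type*} [DecidableEq α] (l : List α) (i k : α) : Prop :=
  l.idxOf i < l.idxOf k

section Aux
variable {α : Type*} [DecidableEq α]

lemma mem_takeWhile_ne' {l : List α} {i : α} (hi : i ∈ l) {x : α} :
    x ∈ l.takeWhile (fun a => a ≠ i) ↔ x ∈ l ∧ l.idxOf x < l.idxOf i := by
  induction l with
  | nil => simp at hi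
  | cons a t ih =>
    rw [List.takeWhile_cons]
    by_cases hai : a = i
    · subst hai
      simp [List.idxOf_cons]
    · have hit : i ∈ t := (List.mem_cons.1 hi).resolve_left fun h => hai h.symm
      have hii : List.idxOf i (a::t) = List.idxOf i t + 1 := by
        simp [List.idxOf_cons, cond_eq_if, beq_iff_eq, hai]
      by_cases hxa : x = a
      · subst hxa
        have hxx : List.idxOf x (x::t) = 0 := by simp [List.idxOf_cons]
        simp [hai, hxx, hii]
      · have hxx : List.idxOf x (a::t) = List.idxOf x t + 1 := by
          simp [List.idxOf_cons, cond_eq_if, beq_iff_eq, Ne.symm hxa]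
        simp only [decide_eq_true_eq, ne_eq, hai, not_false_iff, if_true, List.mem_cons,
          hxa, false_or, ih hit, hxx, hii]
        constructor <;> rintro ⟨h1, h2⟩ <;> exact ⟨h1, by omega⟩

lemma mem_Lminus {l : List α} {i : α} (hi : i ∈ l) {x : α} :
    x ∈ Lminus l i ↔ x ∈ l ∧ l.idxOf x ≤ l.idxOf i := by
  rw [Lminus, Finset.mem_insert, List.mem_toFinset, mem_takeWhile_ne' hi]
  constructor
  · rintro (rfl | ⟨h1, h2⟩)
    · exact ⟨hi, le_refl _⟩
    · exact ⟨h1, le_of_lt h2⟩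
  · rintro ⟨h1, h2⟩
    rcases lt_or_eq_of_le h2 with h | h
    · exact Or.inr ⟨h1, h⟩
    · left
      have h3 := List.idxOf_lt_length_iff.2 hi
      have h4 : l.idxOf x < l.length := h ▸ h3
      calc x = l.get ⟨l.idxOf x, h4⟩ := (List.idxOf_get h4).symm
        _ = l.get ⟨l.idxOf i, h3⟩ := by simp [h]
        _ = i := List.idxOf_get h3

lemma mem_Lminus' {l : List α} (hl : IsLinOrd l) {i x : α} :
    x ∈ Lminus l i ↔ l.idxOf x ≤ l.idxOf i := by
  rw [mem_Lminus (hl.2 i)]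
  simp [hl.2 x]

lemma mem_of_mem_Lminus {m : List α} {i x : α} (h : x ∈ Lminus m i) : x = i ∨ x ∈ m := by
  rcases Finset.mem_insert.1 h with h | h
  · exact Or.inl h
  · exact Or.inr ((List.takeWhile_sublist _).mem (List.mem_toFinset.1 h))

lemma takeWhile_filter_comm (p : α → Bool) {k : α} (hk : p k = true) (l : List α) :
    (l.filter p).takeWhile (fun a => a ≠ k) = (l.takeWhile (fun a => a ≠ k)).filter p := by
  induction l with
  | nil => simp
  | cons a t ih =>
    by_cases hak : a = k
    · subst hak; simp [hk]
    · by_cases hpa : p a = true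
      · simp only [List.filter_cons_of_pos hpa, List.takeWhile_cons]
        simp only [ne_eq, hak, not_false_iff, decide_true, if_true]
        rw [List.filter_cons_of_pos hpa, ih]
      · simp only [List.filter_cons_of_neg (p := p) (a := a) hpa, List.takeWhile_cons]
        simp only [ne_eq, hak, not_false_iff, decide_true, if_true]
        rw [List.filter_cons_of_neg (p := p) (a := a) hpa, ih]

lemma Lminus_filter_mem {U : Finset α} {i : α} (hi : i ∈ U) (l : List α) :
    Lminus (l.filter (fun a => a ∈ U)) i = Lminus l i ∩ U := by
  rw [Lminus, Lminus, takeWhile_filter_comm _ (by simpa using hi)]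
  ext x
  by_cases hxk : x = i <;> simp [hxk, hi, List.mem_filter]

lemma Lminus_filter_not_mem {U : Finset α} {k : α} (hk : k ∉ U) (l : List α) :
    Lminus (l.filter (fun a => a ∉ U)) k = Lminus l k \ U := by
  rw [Lminus, Lminus, takeWhile_filter_comm _ (by simpa using hk)]
  ext x
  by_cases hxk : x = k <;> simp [hxk, hk, List.mem_filter]

end Aux
section Aux2
variable {α : Type*} [DecidableEq α]

lemma filter_mem_Lminus {i : α} :
    ∀ {l : List α}, l.Nodup → i ∈ l →
      l.filter (fun a => a ∈ Lminus l i) = l.takeWhile (fun a => a ≠ i) ++ [i] := by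
  intro l
  induction l with
  | nil => intro _ hi; simp at hi
  | cons a t ih =>
    intro hn hi
    rcases List.nodup_cons.1 hn with ⟨hat, hnt⟩
    by_cases hai : a = i
    · subst hai
      have htw : (a::t).takeWhile (fun x => x ≠ a) = [] := by
        rw [List.takeWhile_cons]; simp
      have hU : Lminus (a::t) a = {a} := by rw [Lminus, htw]; simp
      rw [htw, hU, List.filter_cons_of_pos (by simp)]
      have hnil : t.filter (fun x => x ∈ ({a} : Finset α)) = [] := by
        rw [List.filter_eq_nil_iff]
        intro x hx
        simp only [Finset.mem_singleton, decide_eq_true_eq]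
        rintro rfl
        exact hat hx
      rw [hnil]
      rfl
    · have hit : i ∈ t := (List.mem_cons.1 hi).resolve_left fun h => hai h.symm
      have htw : (a::t).takeWhile (fun x => x ≠ i) = a :: t.takeWhile (fun x => x ≠ i) := by
        rw [List.takeWhile_cons]; simp [hai]
      have hUmem : ∀ x, x ∈ Lminus (a::t) i ↔ (x = i ∨ x = a ∨ x ∈ t.takeWhile (fun x => x ≠ i)) := by
        intro x; rw [Lminus, htw]; simp
      rw [htw, List.filter_cons_of_pos (by simp [hUmem a])]
      have hcong : t.filter (fun x => x ∈ Lminus (a::t) i) =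
          t.filter (fun x => x ∈ Lminus t i) := by
        apply List.filter_congr
        intro x hx
        have hxa : x ≠ a := fun h => hat (h ▸ hx)
        apply decide_eq_decide.2
        rw [hUmem x, Lminus, Finset.mem_insert, List.mem_toFinset]
        tauto
      rw [hcong, ih hnt hit]
      rfl

lemma takeWhile_append_all {p : α → Bool} {l₁ l₂ : List α} (h : ∀ x ∈ l₁, p x = true) :
    (l₁ ++ l₂).takeWhile p = l₁ ++ l₂.takeWhile p := by
  induction l₁ with
  | nil => simp
  | cons a t ih =>
    rw [List.cons_append, List.takeWhile_cons, if_pos (h a (List.mem_cons_self)),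
      ih fun x hx => h x (List.mem_cons_of_mem _ hx), List.cons_append]

lemma takeWhile_append_left {p : α → Bool} {l₁ l₂ : List α} {x : α} (hx : x ∈ l₁)
    (hpx : p x = false) : (l₁ ++ l₂).takeWhile p = l₁.takeWhile p := by
  induction l₁ with
  | nil => simp at hx
  | cons a t ih =>
    rw [List.cons_append, List.takeWhile_cons, List.takeWhile_cons]
    by_cases hpa : p a = true
    · have hxt : x ∈ t := by
        rcases List.mem_cons.1 hx with rfl | h
        · rw [hpx] at hpa; exact absurd hpa (by simp)
        · exact h
      rw [if_pos hpa, if_pos hpa, ih hxt]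
    · rw [if_neg hpa, if_neg hpa]

lemma Lminus_concat {m₀ : List α} {i : α} (hn : (m₀ ++ [i]).Nodup) :
    Lminus (m₀ ++ [i]) i = (m₀ ++ [i]).toFinset := by
  rw [List.nodup_append] at hn
  have htw : (m₀ ++ [i]).takeWhile (fun a => a ≠ i) = m₀ := by
    rw [takeWhile_append_all (fun x hx => by
      simpa using hn.2.2 x hx i (by simp))]
    simp
  rw [Lminus, htw]
  ext x
  simp [or_comm]

lemma Lminus_append {m₀ r : List α} {i : α} (hi : i ∈ m₀) :
    Lminus (m₀ ++ r) i = Lminus m₀ i := by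
  rw [Lminus, Lminus, takeWhile_append_left hi (by simp)]

end Aux2
section Aux3
variable {α : Type*} [DecidableEq α]

lemma eq_of_Lminus_eq : ∀ {m m' : List α}, m.Nodup → m'.Nodup → m.toFinset = m'.toFinset →
    (∀ k ∈ m, Lminus m k = Lminus m' k) → m = m' := by
  intro m
  induction m with
  | nil =>
    intro m' _ _ hset _
    symm
    rw [← List.toFinset_eq_empty_iff, ← hset]
    simp
  | cons a t ih =>
    intro m' hn hn' hset hL
    have ham' : a ∈ m' := by rw [← List.mem_toFinset, ← hset]; simp
    have hLa : Lminus (a::t) a = {a} := by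
      rw [Lminus, List.takeWhile_cons]; simp
    have hLa' : Lminus m' a = {a} := by rw [← hL a (by simp), hLa]
    obtain ⟨b, t', rfl⟩ := List.exists_cons_of_ne_nil (List.ne_nil_of_mem ham')
    have hba : b = a := by
      by_contra hba
      have hb : b ∈ Lminus (b::t') a := by
        rw [Lminus, List.takeWhile_cons]
        simp [hba]
      rw [hLa'] at hb
      exact hba (Finset.mem_singleton.1 hb)
    subst hba
    rcases List.nodup_cons.1 hn with ⟨hat, hnt⟩
    rcases List.nodup_cons.1 hn' with ⟨hat', hnt'⟩
    have hset2 : t.toFinset = t'.toFinset := by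
      ext x
      by_cases hxa : x = b
      · subst hxa; simp [hat, hat']
      · have h := Finset.ext_iff.1 hset x
        simp only [List.toFinset_cons, Finset.mem_insert, List.mem_toFinset] at h
        simp only [List.mem_toFinset]
        tauto
    have hLt : ∀ k ∈ t, Lminus t k = Lminus t' k := by
      intro k hk
      have hka : k ≠ b := fun h => hat (h ▸ hk)
      have h1 : Lminus (b::t) k = insert b (Lminus t k) := by
        rw [Lminus, Lminus, List.takeWhile_cons, if_pos (by simp [Ne.symm hka])]
        ext x
        simp only [List.toFinset_cons, Finset.mem_insert, List.mem_toFinset]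
        tauto
      have h2 : Lminus (b::t') k = insert b (Lminus t' k) := by
        rw [Lminus, Lminus, List.takeWhile_cons, if_pos (by simp [Ne.symm hka])]
        ext x
        simp only [List.toFinset_cons, Finset.mem_insert, List.mem_toFinset]
        tauto
      have h3 := hL k (by simp [hk])
      rw [h1, h2] at h3
      have ha1 : b ∉ Lminus t k := by
        intro h
        rcases mem_of_mem_Lminus h with h | h
        · exact hka h.symm
        · exact hat h
      have ha2 : b ∉ Lminus t' k := by
        intro h
        rcases mem_of_mem_Lminus h with h | h
        · exact hka h.symm
        · exact hat' h
      calc Lminus t k = (insert b (Lminus t k)).erase b := (Finset.erase_insert ha1).symm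
        _ = (insert b (Lminus t' k)).erase b := by rw [h3]
        _ = Lminus t' k := Finset.erase_insert ha2
    rw [ih hnt hnt' hset2 hLt]

lemma exists_Lminus_ne {m m' : List α} (hm : m.Nodup) (hm' : m'.Nodup)
    (hset : m.toFinset = m'.toFinset) (hne : m ≠ m') :
    ∃ k ∈ m, Lminus m k ≠ Lminus m' k := by
  by_contra h
  push_neg at h
  exact hne (eq_of_Lminus_eq hm hm' hset h)

lemma exists_pair_Lminus_eq :
    ∀ n : ℕ, ∀ {m m' : List α}, m.length ≤ n → m.Nodup → m'.Nodup →
      m.toFinset = m'.toFinset → m ≠ m' →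
      ∃ i j, i ≠ j ∧ i ∈ m ∧ j ∈ m' ∧ Lminus m i = Lminus m' j := by
  intro n
  induction n with
  | zero =>
    intro m m' hlen _ _ hset hne
    have hm : m = [] := List.eq_nil_of_length_eq_zero (Nat.le_zero.1 hlen)
    subst hm
    have : m' = [] := by rw [← List.toFinset_eq_empty_iff, ← hset]; simp
    exact absurd this.symm hne
  | succ n ih =>
    intro m m' hlen hm hm' hset hne
    rcases List.eq_nil_or_concat m with rfl | ⟨m₀, i, rfl⟩
    · have : m' = [] := by rw [← List.toFinset_eq_empty_iff, ← hset]; simp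
      exact absurd this.symm hne
    rcases List.eq_nil_or_concat m' with rfl | ⟨m₀', j, rfl⟩
    · have hmnil : m₀.concat i = [] := by
        rw [← List.toFinset_eq_empty_iff, hset]; simp
      simp at hmnil
    simp only [List.concat_eq_append] at hset hne hm hm' ⊢
    by_cases hij : i = j
    · subst hij
      have hnm : m₀.Nodup := (List.nodup_append.1 hm).1
      have hnm' : m₀'.Nodup := (List.nodup_append.1 hm').1
      have hi0 : i ∉ m₀ := fun h => (List.nodup_append.1 hm).2.2 i h i (by simp) rfl
      have hi0' : i ∉ m₀' := fun h => (List.nodup_append.1 hm').2.2 i h i (by simp) rfl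
      have hset0 : m₀.toFinset = m₀'.toFinset := by
        ext x
        by_cases hxi : x = i
        · subst hxi; simp [hi0, hi0']
        · have h := Finset.ext_iff.1 hset x
          simp only [List.toFinset_append, List.toFinset_cons, List.toFinset_nil,
            Finset.mem_union, Finset.mem_insert, List.mem_toFinset, Finset.mem_singleton,
            Finset.notMem_empty, or_false] at h
          simp only [List.mem_toFinset]
          tauto
      have hne0 : m₀ ≠ m₀' := fun h => hne (by rw [h])
      have hlen0 : m₀.length ≤ n := by
        have h := hlen
        simp only [List.concat_eq_append, List.length_append, List.length_cons,
          List.length_nil] at h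
        omega
      obtain ⟨i', j', hij', him, hjm, hLL⟩ := ih hlen0 hnm hnm' hset0 hne0
      exact ⟨i', j', hij', by simp [him], by simp [hjm],
        by rw [Lminus_append him, Lminus_append hjm, hLL]⟩
    · refine ⟨i, j, hij, by simp, by simp, ?_⟩
      rw [Lminus_concat hm, Lminus_concat hm', hset]

end Aux3
/-- Turansick's condition (2) on two linear orderings is equivalent to the existence of a
nonempty proper common beginning set on which, and on whose complement, the orderings
differ. -/
theorem stmt19 {α : Type*} [Fintype α] [DecidableEq α]
    (l l' : List α) (hl : IsLinOrd l) (hl' : IsLinOrd l') :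
    (∃ i j k : α, gtL l i k ∧ gtL l j k ∧ gtL l' i k ∧ gtL l' j k ∧ i ≠ j ∧
        Lminus l k ≠ Lminus l' k ∧ Lminus l i = Lminus l' j) ↔
      (∃ U : Finset α, U ≠ ∅ ∧ U ≠ Finset.univ ∧
        (∃ i, U = Lminus l i) ∧ (∃ j, U = Lminus l' j) ∧
        l.filter (fun a => a ∈ U) ≠ l'.filter (fun a => a ∈ U) ∧
        l.filter (fun a => a ∉ U) ≠ l'.filter (fun a => a ∉ U)) := by
  constructor
  · rintro ⟨i, j, k, hik, hjk, hik', hjk', hij, hkne, hLij⟩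
    have hik2 : l.idxOf i < l.idxOf k := hik
    have hjk2 : l'.idxOf j < l'.idxOf k := hjk'
    refine ⟨Lminus l i, ?_, ?_, ⟨i, rfl⟩, ⟨j, hLij⟩, ?_, ?_⟩
    · exact Finset.ne_empty_of_mem ((mem_Lminus' hl).2 le_rfl)
    · intro h
      have hk : k ∈ Lminus l i := h ▸ Finset.mem_univ k
      rw [mem_Lminus' hl] at hk
      omega
    · intro h
      have e1 : l.filter (fun a => a ∈ Lminus l i) = l.takeWhile (fun a => a ≠ i) ++ [i] :=
        filter_mem_Lminus hl.1 (hl.2 i)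
      have e2 : l'.filter (fun a => a ∈ Lminus l i) = l'.takeWhile (fun a => a ≠ j) ++ [j] := by
        rw [hLij]; exact filter_mem_Lminus hl'.1 (hl'.2 j)
      rw [e1, e2] at h
      have h2 := congrArg List.getLast? h
      rw [List.getLast?_concat, List.getLast?_concat] at h2
      exact hij (Option.some.inj h2)
    · intro h
      have hkU : k ∉ Lminus l i := by
        rw [mem_Lminus' hl]; omega
      have c1 := Lminus_filter_not_mem hkU l
      have c2 := Lminus_filter_not_mem hkU l'
      rw [h] at c1
      have hdiff : Lminus l k \ Lminus l i = Lminus l' k \ Lminus l i := by rw [← c1, ← c2]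
      have hsub1 : Lminus l i ⊆ Lminus l k := by
        intro x hx
        rw [mem_Lminus' hl] at hx ⊢
        omega
      have hsub2 : Lminus l i ⊆ Lminus l' k := by
        intro x hx
        rw [hLij, mem_Lminus' hl'] at hx
        rw [mem_Lminus' hl']
        omega
      apply hkne
      calc Lminus l k = Lminus l i ∪ Lminus l k \ Lminus l i :=
            (Finset.union_sdiff_of_subset hsub1).symm
        _ = Lminus l i ∪ Lminus l' k \ Lminus l i := by rw [hdiff]
        _ = Lminus l' k := Finset.union_sdiff_of_subset hsub2
  · rintro ⟨U, hU0, hUuniv, ⟨i₀, hUi⟩, ⟨j₀, hUj⟩, hfU, hfC⟩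
    have hmemU : ∀ x, x ∈ U ↔ l.idxOf x ≤ l.idxOf i₀ := by
      intro x; rw [hUi, mem_Lminus' hl]
    have hmemU' : ∀ x, x ∈ U ↔ l'.idxOf x ≤ l'.idxOf j₀ := by
      intro x; rw [hUj, mem_Lminus' hl']
    have hnodC : (l.filter (fun a => a ∉ U)).Nodup := hl.1.filter _
    have hnodC' : (l'.filter (fun a => a ∉ U)).Nodup := hl'.1.filter _
    have hsetC : (l.filter (fun a => a ∉ U)).toFinset =
        (l'.filter (fun a => a ∉ U)).toFinset := by
      ext x; simp [List.mem_filter, hl.2 x, hl'.2 x]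
    obtain ⟨k, hkmem, hkneq⟩ := exists_Lminus_ne hnodC hnodC' hsetC hfC
    have hkU : k ∉ U := by
      have h := List.mem_filter.1 hkmem; simpa using h.2
    have hkdiff : Lminus l k ≠ Lminus l' k := by
      intro h
      apply hkneq
      rw [Lminus_filter_not_mem hkU l, Lminus_filter_not_mem hkU l', h]
    have hnodU : (l.filter (fun a => a ∈ U)).Nodup := hl.1.filter _
    have hnodU' : (l'.filter (fun a => a ∈ U)).Nodup := hl'.1.filter _
    have hsetU : (l.filter (fun a => a ∈ U)).toFinset =
        (l'.filter (fun a => a ∈ U)).toFinset := by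
      ext x; simp [List.mem_filter, hl.2 x, hl'.2 x]
    obtain ⟨i, j, hij, him, hjm, hLL⟩ :=
      exists_pair_Lminus_eq (l.filter (fun a => a ∈ U)).length le_rfl hnodU hnodU' hsetU hfU
    have hiU : i ∈ U := by
      have h := List.mem_filter.1 him; simpa using h.2
    have hjU : j ∈ U := by
      have h := List.mem_filter.1 hjm; simpa using h.2
    have hLi : Lminus l i ∩ U = Lminus l' j ∩ U := by
      rw [← Lminus_filter_mem hiU l, ← Lminus_filter_mem hjU l', hLL]
    have hsubi : Lminus l i ⊆ U := by
      intro x hx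
      rw [mem_Lminus' hl] at hx
      rw [hmemU x]
      exact le_trans hx ((hmemU i).1 hiU)
    have hsubj : Lminus l' j ⊆ U := by
      intro x hx
      rw [mem_Lminus' hl'] at hx
      rw [hmemU' x]
      exact le_trans hx ((hmemU' j).1 hjU)
    have hLeq : Lminus l i = Lminus l' j := by
      rw [← Finset.inter_eq_left.2 hsubi, ← Finset.inter_eq_left.2 hsubj, hLi]
    have hkgt : l.idxOf i₀ < l.idxOf k := by
      by_contra h
      exact hkU ((hmemU k).2 (by omega))
    have hkgt' : l'.idxOf j₀ < l'.idxOf k := by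
      by_contra h
      exact hkU ((hmemU' k).2 (by omega))
    refine ⟨i, j, k, ?_, ?_, ?_, ?_, hij, hkdiff, hLeq⟩
    · exact lt_of_le_of_lt ((hmemU i).1 hiU) hkgt
    · exact lt_of_le_of_lt ((hmemU j).1 hjU) hkgt
    · exact lt_of_le_of_lt ((hmemU' i).1 hiU) hkgt'
    · exact lt_of_le_of_lt ((hmemU' j).1 hjU) hkgt'
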